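/- Let R be a commutative ring, A an associative unital R-algebra, and (θ; x₁, …, xₙ; y₁, …, yₙ) a Frobenius system for A over R such that (x₁, …, xₙ) is an R-basis of A. Let μ be an R-algebra automorphism of A satisfying θ(c·a) = θ(μ(a)·c) for all a, c ∈ A, and set ω := ∑ᵢ μ(xᵢ)·yᵢ. Then ω is a μ-normal element of A: μ(a)·ω = ω·a for every a ∈ A. -/

import Mathlib

/-- **The different is a `μ`-normal element.** If `(θ; x; y)` is a Frobenius system for
the `R`-algebra `A` with `x` an `R`-basis and `μ` is a Nakayama automorphism
(`θ (c * a) = θ (μ a * c)`), then `ω := ∑ i, μ (xᵢ) * yᵢ` satisfies `μ a * ω = ω * a`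
for every `a ∈ A`. -/
theorem stmt5 {R A : Type*} [CommRing R] [Ring A] [Algebra R A]
    {n : ℕ} (θ : A →ₗ[R] R) (x y : Fin n → A)
    (h1 : ∀ a : A, ∑ i, θ (y i * a) • x i = a)
    (h2 : ∀ a : A, ∑ i, θ (a * x i) • y i = a)
    (b : Module.Basis (Fin n) R A) (hb : ∀ i, b i = x i)
    (μ : A ≃ₐ[R] A) (hμ : ∀ a c : A, θ (c * a) = θ (μ a * c)) :
    ∀ a : A, μ a * (∑ i, μ (x i) * y i) = (∑ i, μ (x i) * y i) * a := by
  intro a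
  calc μ a * ∑ i, μ (x i) * y i
      = ∑ j, μ (a * x j) * y j := by
        rw [Finset.mul_sum]
        refine Finset.sum_congr rfl fun j _ => ?_
        rw [map_mul, mul_assoc]
    _ = ∑ j, μ (∑ i, θ (y i * (a * x j)) • x i) * y j := by
        refine Finset.sum_congr rfl fun j _ => ?_
        rw [h1 (a * x j)]
    _ = ∑ j, (∑ i, θ (y i * (a * x j)) • μ (x i)) * y j := by
        simp [map_sum]
    _ = ∑ i, ∑ j, θ (y i * (a * x j)) • (μ (x i) * y j) := by
        rw [Finset.sum_comm]
        simp [Finset.sum_mul, smul_mul_assoc]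
    _ = ∑ i, μ (x i) * (∑ j, θ ((y i * a) * x j) • y j) := by
        simp [Finset.mul_sum, mul_smul_comm, mul_assoc]
    _ = ∑ i, μ (x i) * (y i * a) := by simp [h2]
    _ = (∑ i, μ (x i) * y i) * a := by simp [Finset.sum_mul, mul_assoc]
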